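/- Let J be an m-primary ideal and I ⊆ m an ideal of positive height in R. Let T = B(I) ⊆ R[t, t^{-1}], let M be the ideal of T generated by t^{-1}, J and {a t : a ∈ I}, and set K = J² + I, H = J + I. Then for all integers r > j ≥ 0, the homogeneous ideal M^{2(r−j)} decomposes by degree as follows: for every n ∈ ℤ and a ∈ R, one has a·t^n ∈ M^{2(r−j)} if and only if a ∈ C_n, where (with the conventions I^e = R and K^e = R for e ≤ 0): C_n = I^n if |n| ≥ 2r; C_n = I^n · K^{i−j} if |n| = 2r − 2i with 1 ≤ i ≤ r−1; C_n = I^n if |n| = 2r − 2i − 1 with 0 ≤ i ≤ j−1; C_n = I^n · H · K^{i−j} if |n| = 2r − 2i − 1 with j ≤ i ≤ r−1; and C_0 = K^{r−j}. -/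

import Mathlib

open Filter IsLocalRing

set_option maxHeartbeats 1000000
set_option synthInstance.maxHeartbeats 1000000

noncomputable section

/-- The length of an `R`-module `M`: the Krull dimension of its lattice of submodules,
i.e. the supremum of the lengths of chains of submodules of `M`. -/
def moduleLength (R M : Type*) [CommRing R] [AddCommGroup M] [Module R M] : WithBot ℕ∞ :=
  Order.krullDim (Submodule R M)

/-- For ideals `I, I'` of `R`, the subquotient `I / (I ∩ I')` (equal to `I/I'` when `I' ≤ I`),
as an `R`-module. -/
abbrev idealSubquot {R : Type*} [CommRing R] (I I' : Ideal R) : Type _ :=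
  I ⧸ (Submodule.comap I.subtype I')

/-- `IsMixedMult J q e` says that `e` is the mixed multiplicity
`e((J 0) ^ [q 0 + 1] | (J 1) ^ [q 1] | ⋯ | (J k) ^ [q k])` of the family of ideals `J`, in the
sense of Bhattacharya–Teissier–Rees: there is a polynomial `P` with rational coefficients such
that `P (r 0, …, r k) = ℓ ((J 0)^{r 0} ⋯ (J k)^{r k} / (J 0)^{r 0 + 1} (J 1)^{r 1} ⋯ (J k)^{r k})`
for all sufficiently large `r 0, …, r k`, and `e` equals `(q 0)! ⋯ (q k)!` times the coefficient
of `x 0 ^ (q 0) ⋯ x k ^ (q k)` in `P`. -/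
def IsMixedMult {R : Type*} [CommRing R] {k : ℕ} (J : Fin (k + 1) → Ideal R)
    (q : Fin (k + 1) → ℕ) (e : ℚ) : Prop :=
  ∃ P : MvPolynomial (Fin (k + 1)) ℚ,
    (∃ N : ℕ, ∀ r : Fin (k + 1) → ℕ, (∀ i, N ≤ r i) → ∃ n : ℕ,
        moduleLength R (idealSubquot (∏ i, J i ^ r i) (J 0 * ∏ i, J i ^ r i)) = (n : ℕ∞) ∧
        (n : ℚ) = MvPolynomial.eval (fun i => (r i : ℚ)) P) ∧
    e = (∏ i, (q i).factorial : ℕ) *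
        MvPolynomial.coeff (Finsupp.equivFunOnFinite.symm q) P

/-- `IsHSMult A J e` says that `e` is the Hilbert–Samuel multiplicity of the (primary) ideal `J`
in the ring `A` of Krull dimension `D`: `e` is `D !` times the leading coefficient of the
polynomial `Q` of degree `D` with `Q r = ℓ (A / J ^ (r+1))` for all large `r`. -/
def IsHSMult (A : Type*) [CommRing A] (J : Ideal A) (e : ℚ) : Prop :=
  ∃ (D : ℕ) (Q : Polynomial ℚ), ringKrullDim A = D ∧
    (∃ N : ℕ, ∀ r : ℕ, N ≤ r → ∃ n : ℕ,
        moduleLength A (A ⧸ J ^ (r + 1)) = (n : ℕ∞) ∧ (n : ℚ) = Q.eval (r : ℚ)) ∧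
    e = (D.factorial : ℚ) * Q.coeff D

/-- An ideal has positive height if it is contained in no minimal prime of the ring. -/
def PosHeight {R : Type*} [CommRing R] (I : Ideal R) : Prop :=
  ∀ p ∈ minimalPrimes R, ¬ I ≤ p

/-- The extended Rees algebra `B(I) = ⊕ₙ Iⁿ tⁿ ⊆ R[t, t⁻¹]`: the `R`-subalgebra of the Laurent
polynomial ring generated by `t⁻¹` and the elements `a * t` for `a ∈ I`. -/
def extRees (R : Type*) [CommRing R] (I : Ideal R) : Subalgebra R (LaurentPolynomial R) :=
  Algebra.adjoin R ({LaurentPolynomial.T (-1)} ∪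
    ((fun a => LaurentPolynomial.C a * LaurentPolynomial.T 1) '' (I : Set R)))

/-- The ideal of the extended Rees algebra `B(I)` generated by `t⁻¹`, the elements of `J`, and
the elements `a * t` for `a ∈ I`.  For `J = m` this is the maximal homogeneous ideal `N(I)`. -/
def extReesIdeal (R : Type*) [CommRing R] (I J : Ideal R) : Ideal (extRees R I) :=
  Ideal.span {x : extRees R I | (x : LaurentPolynomial R) ∈
    ({LaurentPolynomial.T (-1)} ∪ (⇑LaurentPolynomial.C '' (J : Set R)) ∪
      ((fun a => LaurentPolynomial.C a * LaurentPolynomial.T 1) '' (I : Set R)))}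

/-- `I^n` for an integer `n`, with the convention `I^n = R` for `n ≤ 0`. -/
def zpowIdeal {R : Type*} [CommRing R] (I : Ideal R) (n : ℤ) : Ideal R :=
  if 0 < n then I ^ n.toNat else ⊤

/-- `a · tⁿ` belongs to the (homogeneous) ideal `𝓐` of the extended Rees algebra `B(I)`. -/
def memExtRees {R : Type*} [CommRing R] {I : Ideal R} (𝓐 : Ideal (extRees R I))
    (n : ℤ) (a : R) : Prop :=
  ∃ y ∈ 𝓐, (y : LaurentPolynomial R) = LaurentPolynomial.C a * LaurentPolynomial.T n

namespace Lemma24Aux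

open LaurentPolynomial

variable {R : Type*} [CommRing R]

/-! ### `zpowIdeal` basics -/

theorem zpow_of_nonpos (I : Ideal R) {n : ℤ} (h : n ≤ 0) : zpowIdeal I n = ⊤ :=
  if_neg (by omega)

theorem zpow_of_pos (I : Ideal R) {n : ℤ} (h : 0 < n) : zpowIdeal I n = I ^ n.toNat :=
  if_pos h

theorem zpow_zero (I : Ideal R) : zpowIdeal I 0 = ⊤ := zpow_of_nonpos I le_rfl

theorem zpow_one (I : Ideal R) : zpowIdeal I 1 = I := by
  rw [zpow_of_pos I one_pos, Int.toNat_one, pow_one]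

theorem zpow_anti (I : Ideal R) {k l : ℤ} (h : k ≤ l) : zpowIdeal I l ≤ zpowIdeal I k := by
  rcases le_or_gt k 0 with hk | hk
  · rw [zpow_of_nonpos I hk]; exact le_top
  · rw [zpow_of_pos I hk, zpow_of_pos I (hk.trans_le h)]
    exact Ideal.pow_le_pow_right (by omega)

theorem mul_zpow (I : Ideal R) {n : ℤ} (h : 0 ≤ n) : I * zpowIdeal I n = zpowIdeal I (n + 1) := by
  rcases h.lt_or_eq with h | h
  · rw [zpow_of_pos I h, zpow_of_pos I (by omega), show (n + 1).toNat = n.toNat + 1 by omega,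
      pow_succ, mul_comm]
  · rw [← h, zpow_zero, Ideal.mul_top, zero_add, zpow_one]

theorem zpow_mul_zpow_le (I : Ideal R) (k l : ℤ) :
    zpowIdeal I k * zpowIdeal I l ≤ zpowIdeal I (k + l) := by
  rcases le_or_gt k 0 with hk | hk
  · rw [zpow_of_nonpos I hk, Ideal.top_mul]
    exact zpow_anti I (by omega)
  rcases le_or_gt l 0 with hl | hl
  · rw [zpow_of_nonpos I hl, Ideal.mul_top]
    exact zpow_anti I (by omega)
  · rw [zpow_of_pos I hk, zpow_of_pos I hl, zpow_of_pos I (by omega), ← pow_add,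
      show k.toNat + l.toNat = (k + l).toNat by omega]

/-! ### coefficients -/

theorem coeff_C_mul_T (a : R) (m n : ℤ) :
    ((C a * T m : LaurentPolynomial R)).coeff n = if m = n then a else 0 := by
  rw [← single_eq_C_mul_T]; exact Finsupp.single_apply

theorem coeff_mul_C_mul_T (f : LaurentPolynomial R) (a : R) (m n : ℤ) :
    ((f * (C a * T m) : LaurentPolynomial R)).coeff n = f.coeff (n - m) * a := by
  rw [← single_eq_C_mul_T]
  exact AddMonoidAlgebra.coeff_mul_single_apply f a m n

theorem coeff_mul_T (f : LaurentPolynomial R) (m n : ℤ) : ((f * T m : LaurentPolynomial R)).coeff n = f.coeff (n - m) := by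
  have := coeff_mul_C_mul_T f 1 m n
  rwa [map_one, one_mul, mul_one] at this

theorem coeff_mul_mem (I : Ideal R) {P : ℤ → Ideal R}
    (hP : ∀ k l : ℤ, zpowIdeal I k * P l ≤ P (k + l))
    {f g : LaurentPolynomial R} (hf : ∀ k, f.coeff k ∈ zpowIdeal I k) (hg : ∀ k, g.coeff k ∈ P k)
    (n : ℤ) : ((f * g : LaurentPolynomial R)).coeff n ∈ P n := by
  classical
  rw [AddMonoidAlgebra.coeff_mul]
  simp only [Finsupp.sum]
  refine Ideal.sum_mem _ fun a _ => Ideal.sum_mem _ fun b _ => ?_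
  split_ifs with h
  · exact h ▸ hP a b (Ideal.mul_mem_mul (hf a) (hg b))
  · exact Submodule.zero_mem _

theorem coeff_mem_of_mem_extRees {I : Ideal R} {f : LaurentPolynomial R}
    (hf : f ∈ extRees R I) (n : ℤ) : f.coeff n ∈ zpowIdeal I n := by
  revert n
  refine Algebra.adjoin_induction (p := fun x _ => ∀ n : ℤ, x.coeff n ∈ zpowIdeal I n)
    ?_ ?_ ?_ ?_ hf
  · rintro x (rfl | ⟨a, ha, rfl⟩) n
    · rcases eq_or_ne n (-1) with rfl | hn
      · rw [zpow_of_nonpos I (by omega)]; trivial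
      · have : (T (-1) : LaurentPolynomial R).coeff n = 0 := by
          rw [T_apply, if_neg (fun h => hn h.symm)]
        rw [this]; exact Submodule.zero_mem _
    · rcases eq_or_ne n 1 with rfl | hn
      · rw [coeff_C_mul_T, if_pos rfl, zpow_one]; exact ha
      · rw [coeff_C_mul_T, if_neg (fun h => hn h.symm)]; exact Submodule.zero_mem _
  · intro r n
    rw [← C_eq_algebraMap, show (C r : LaurentPolynomial R) = C r * T 0 by
      rw [T_zero, mul_one], coeff_C_mul_T]
    rcases eq_or_ne n 0 with rfl | hn
    · rw [if_pos rfl, zpow_zero]; trivial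
    · rw [if_neg (fun h => hn h.symm)]; exact Submodule.zero_mem _
  · intro x y _ _ hx hy n
    rw [AddMonoidAlgebra.coeff_add, Finsupp.add_apply]
    exact Ideal.add_mem _ (hx n) (hy n)
  · intro x y _ _ hx hy n
    exact coeff_mul_mem I (zpow_mul_zpow_le I) hx hy n

/-! ### elements of the extended Rees algebra -/


theorem C_mem (I : Ideal R) (a : R) : (C a : LaurentPolynomial R) ∈ extRees R I := by
  rw [C_eq_algebraMap]
  exact Subalgebra.algebraMap_mem _ a

theorem T_neg_one_mem (I : Ideal R) : (T (-1) : LaurentPolynomial R) ∈ extRees R I :=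
  Algebra.subset_adjoin (Set.mem_union_left _ rfl)

theorem C_mul_T_natCast_mem (I : Ideal R) :
    ∀ (m : ℕ) (a : R), a ∈ I ^ m → (C a * T (m : ℤ)) ∈ extRees R I := by
  intro m
  induction m with
  | zero =>
    intro a _
    rw [Int.natCast_zero, T_zero, mul_one]
    exact C_mem I a
  | succ m ih =>
    intro a ha
    rw [pow_succ] at ha
    refine Submodule.mul_induction_on ha ?_ ?_
    · intro x hx y hy
      have h1 : (C (x * y) * T ((m : ℕ) + 1 : ℤ) : LaurentPolynomial R)
          = (C x * T (m : ℤ)) * (C y * T 1) := by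
        rw [map_mul, T_add]; ring
      rw [show ((m + 1 : ℕ) : ℤ) = ((m : ℕ) + 1 : ℤ) by push_cast; ring, h1]
      exact mul_mem (ih x hx) (Algebra.subset_adjoin (Set.mem_union_right _ ⟨y, hy, rfl⟩))
    · intro x y hx hy
      rw [map_add, add_mul]
      exact add_mem hx hy

theorem C_mul_T_mem {I : Ideal R} {n : ℤ} {a : R} (ha : a ∈ zpowIdeal I n) :
    (C a * T n) ∈ extRees R I := by
  rcases le_or_gt n 0 with h | h
  · have h1 : (C a * T n : LaurentPolynomial R) = C a * (T (-1)) ^ (-n).toNat := by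
      rw [T_pow, show ((-n).toNat : ℤ) * (-1) = n by omega]
    rw [h1]
    exact mul_mem (C_mem I a) (pow_mem (T_neg_one_mem I) _)
  · rw [zpow_of_pos I h] at ha
    have := C_mul_T_natCast_mem I n.toNat a ha
    rwa [Int.toNat_of_nonneg h.le] at this

/-! ### the ideals `S` -/

def SSn (I J : Ideal R) : ℕ → Ideal R
  | 0 => ⊤
  | 1 => J ⊔ I
  | (c + 2) => (J ^ 2 ⊔ I) * SSn I J c

theorem SSn_zero (I J : Ideal R) : SSn I J 0 = ⊤ := by rw [SSn]

theorem SSn_one (I J : Ideal R) : SSn I J 1 = J ⊔ I := by rw [SSn]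

theorem SSn_add_two (I J : Ideal R) (c : ℕ) : SSn I J (c + 2) = (J ^ 2 ⊔ I) * SSn I J c := by
  rw [SSn]

theorem K_le_H (I J : Ideal R) : J ^ 2 ⊔ I ≤ J ⊔ I :=
  sup_le_sup_right (Ideal.pow_le_self two_ne_zero) I

theorem JH_le_K (I J : Ideal R) : J * (J ⊔ I) ≤ J ^ 2 ⊔ I := by
  rw [Ideal.mul_sup]
  refine sup_le ?_ (le_trans Ideal.mul_le_right le_sup_right)
  rw [← pow_two]
  exact le_sup_left

theorem SSn_succ_le (I J : Ideal R) : ∀ c, SSn I J (c + 1) ≤ SSn I J c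
  | 0 => le_top
  | 1 => by
    rw [show (1 : ℕ) + 1 = 0 + 2 from rfl, SSn_add_two, SSn_zero, SSn_one, Ideal.mul_top]
    exact K_le_H I J
  | (c + 2) => by
    rw [show c + 2 + 1 = (c + 1) + 2 from rfl, SSn_add_two, SSn_add_two]
    exact Ideal.mul_mono_right (SSn_succ_le I J c)

theorem SSn_anti (I J : Ideal R) : Antitone (SSn I J) :=
  antitone_nat_of_succ_le (SSn_succ_le I J)

theorem SSn_I_le (I J : Ideal R) : ∀ c, I * SSn I J c ≤ SSn I J (c + 1)
  | 0 => by rw [SSn_zero, SSn_one, Ideal.mul_top]; exact le_sup_right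
  | 1 => by
    rw [show (1 : ℕ) + 1 = 0 + 2 from rfl, SSn_add_two, SSn_zero, Ideal.mul_top]
    exact le_trans Ideal.mul_le_left le_sup_right
  | (c + 2) => by
    rw [SSn_add_two, show c + 2 + 1 = (c + 1) + 2 from rfl, SSn_add_two, mul_left_comm]
    exact Ideal.mul_mono_right (SSn_I_le I J c)

theorem SSn_J_le (I J : Ideal R) : ∀ c, J * SSn I J c ≤ SSn I J (c + 1)
  | 0 => by rw [SSn_zero, SSn_one, Ideal.mul_top]; exact le_sup_left
  | 1 => by
    rw [show (1 : ℕ) + 1 = 0 + 2 from rfl, SSn_add_two, SSn_zero, SSn_one, Ideal.mul_top]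
    exact JH_le_K I J
  | (c + 2) => by
    rw [SSn_add_two, show c + 2 + 1 = (c + 1) + 2 from rfl, SSn_add_two, mul_left_comm]
    exact Ideal.mul_mono_right (SSn_J_le I J c)

theorem SSn_I2_le (I J : Ideal R) (c : ℕ) : I * SSn I J c ≤ SSn I J (c + 2) := by
  rw [SSn_add_two]
  exact Ideal.mul_mono_left le_sup_right

theorem SSn_split (I J : Ideal R) : ∀ c, SSn I J (c + 2) ≤ I * SSn I J c ⊔ J * SSn I J (c + 1)
  | 0 => by
    rw [SSn_add_two, SSn_zero, SSn_one, Ideal.mul_top, Ideal.mul_top]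
    refine sup_le ?_ le_sup_left
    rw [pow_two]
    exact le_trans (Ideal.mul_mono_right le_sup_left) le_sup_right
  | 1 => by
    rw [show (1 : ℕ) + 2 = 1 + 2 from rfl, SSn_add_two, SSn_one,
      show (1 : ℕ) + 1 = 0 + 2 from rfl, SSn_add_two, SSn_zero, Ideal.mul_top, Ideal.sup_mul]
    refine sup_le ?_ le_sup_left
    conv_lhs => rw [pow_two, mul_assoc]
    exact le_trans (Ideal.mul_mono_right (JH_le_K I J)) le_sup_right
  | (c + 2) => by
    rw [show c + 2 + 2 = (c + 2) + 2 from rfl, SSn_add_two]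
    refine le_trans (Ideal.mul_mono_right (SSn_split I J c)) ?_
    rw [Ideal.mul_sup, mul_left_comm, mul_left_comm (J ^ 2 ⊔ I) J]
    exact sup_le_sup (Ideal.mul_mono_right (le_of_eq (SSn_add_two I J c).symm))
      (Ideal.mul_mono_right (le_of_eq (by
        rw [show c + 1 + 2 = c + 2 + 1 from rfl, SSn_add_two])))

theorem SSn_two_mul (I J : Ideal R) : ∀ w, SSn I J (2 * w) = (J ^ 2 ⊔ I) ^ w
  | 0 => by rw [Nat.mul_zero, SSn_zero, pow_zero, Ideal.one_eq_top]
  | (w + 1) => by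
    rw [show 2 * (w + 1) = 2 * w + 2 by ring, SSn_add_two, SSn_two_mul I J w, ← pow_succ']

theorem SSn_two_mul_add_one (I J : Ideal R) :
    ∀ w, SSn I J (2 * w + 1) = (J ⊔ I) * (J ^ 2 ⊔ I) ^ w
  | 0 => by rw [Nat.mul_zero, Nat.zero_add, SSn_one, pow_zero, mul_one]
  | (w + 1) => by
    rw [show 2 * (w + 1) + 1 = (2 * w + 1) + 2 by ring, SSn_add_two,
      SSn_two_mul_add_one I J w, mul_left_comm, ← pow_succ']

def SS (I J : Ideal R) (c : ℤ) : Ideal R := SSn I J c.toNat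

theorem SS_of_nonpos (I J : Ideal R) {c : ℤ} (h : c ≤ 0) : SS I J c = ⊤ := by
  rw [SS, Int.toNat_of_nonpos h, SSn_zero]

theorem SS_anti (I J : Ideal R) {c c' : ℤ} (h : c' ≤ c) : SS I J c ≤ SS I J c' :=
  SSn_anti I J (Int.toNat_le_toNat h)

theorem SS_I_le (I J : Ideal R) (c : ℤ) : I * SS I J c ≤ SS I J (c + 1) := by
  rcases le_or_gt (c + 1) 0 with h | h
  · rw [SS_of_nonpos I J h]; exact le_top
  rcases le_or_gt c 0 with h0 | h0
  · rw [SS_of_nonpos I J h0, Ideal.mul_top, SS, show (c + 1).toNat = 1 by omega, SSn_one]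
    exact le_sup_right
  · rw [SS, SS, show (c + 1).toNat = c.toNat + 1 by omega]
    exact SSn_I_le I J c.toNat

theorem SS_J_le (I J : Ideal R) (c : ℤ) : J * SS I J c ≤ SS I J (c + 1) := by
  rcases le_or_gt (c + 1) 0 with h | h
  · rw [SS_of_nonpos I J h]; exact le_top
  rcases le_or_gt c 0 with h0 | h0
  · rw [SS_of_nonpos I J h0, Ideal.mul_top, SS, show (c + 1).toNat = 1 by omega, SSn_one]
    exact le_sup_left
  · rw [SS, SS, show (c + 1).toNat = c.toNat + 1 by omega]
    exact SSn_J_le I J c.toNat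

theorem SS_I2_le (I J : Ideal R) (c : ℤ) : I * SS I J (c - 1) ≤ SS I J (c + 1) := by
  rcases le_or_gt (c + 1) 0 with h | h
  · rw [SS_of_nonpos I J h]; exact le_top
  rcases le_or_gt c 0 with h0 | h0
  · rw [SS_of_nonpos I J (by omega : c - 1 ≤ 0), Ideal.mul_top, SS,
      show (c + 1).toNat = 1 by omega, SSn_one]
    exact le_sup_right
  rcases le_or_gt c 1 with h1 | h1
  · rw [SS_of_nonpos I J (by omega : c - 1 ≤ 0), Ideal.mul_top, SS,
      show (c + 1).toNat = 0 + 2 by omega, SSn_add_two, SSn_zero, Ideal.mul_top]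
    exact le_sup_right
  · rw [SS, SS, show (c + 1).toNat = (c - 1).toNat + 2 by omega]
    exact SSn_I2_le I J _

theorem SS_split (I J : Ideal R) (s : ℕ) :
    SS I J ((s : ℤ) + 1) ≤ I * SS I J ((s : ℤ) - 1) ⊔ J * SS I J (s : ℤ) := by
  cases s with
  | zero =>
    rw [SS_of_nonpos I J (by omega : ((0 : ℕ) : ℤ) - 1 ≤ 0),
      SS_of_nonpos I J (by omega : ((0 : ℕ) : ℤ) ≤ 0), Ideal.mul_top, Ideal.mul_top, SS,
      show (((0 : ℕ) : ℤ) + 1).toNat = 1 by omega, SSn_one]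
    exact sup_le le_sup_right le_sup_left
  | succ c =>
    rw [SS, SS, SS, show (((c + 1 : ℕ) : ℤ) + 1).toNat = c + 2 by omega,
      show (((c + 1 : ℕ) : ℤ) - 1).toNat = c by omega,
      show ((c + 1 : ℕ) : ℤ).toNat = c + 1 by omega]
    exact SSn_split I J c

theorem SS_two_mul (I J : Ideal R) (z : ℤ) : SS I J (2 * z) = zpowIdeal (J ^ 2 ⊔ I) z := by
  rcases le_or_gt z 0 with h | h
  · rw [SS_of_nonpos I J (by omega), zpow_of_nonpos _ h]
  · rw [SS, show (2 * z).toNat = 2 * z.toNat by omega, SSn_two_mul, zpow_of_pos _ h]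

theorem SS_two_mul_add_one (I J : Ideal R) {z : ℤ} (h : 0 ≤ z) :
    SS I J (2 * z + 1) = (J ⊔ I) * zpowIdeal (J ^ 2 ⊔ I) z := by
  rcases h.lt_or_eq with h | h
  · rw [SS, show (2 * z + 1).toNat = 2 * z.toNat + 1 by omega, SSn_two_mul_add_one,
      zpow_of_pos _ h]
  · rw [← h, zpow_zero, Ideal.mul_top, show (2 * (0 : ℤ) + 1) = 1 by ring, SS,
      show (1 : ℤ).toNat = 1 from rfl, SSn_one]

/-! ### the graded family `G` -/

def G (I J : Ideal R) (s : ℕ) (n : ℤ) : Ideal R :=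
  zpowIdeal I n * SS I J ((s : ℤ) - n.natAbs)

theorem SS_congr (I J : Ideal R) {c c' : ℤ} (h : c = c') : SS I J c = SS I J c' := by rw [h]

theorem G_zero (I J : Ideal R) (n : ℤ) : G I J 0 n = zpowIdeal I n := by
  rw [G, SS_of_nonpos I J (by omega), Ideal.mul_top]

theorem G_step_up (I J : Ideal R) (s : ℕ) (m : ℤ) : I * G I J s m ≤ G I J s (m + 1) := by
  rcases le_or_gt m (-1) with h | h
  · rw [G, G, zpow_of_nonpos I (by omega), zpow_of_nonpos I (by omega), Ideal.top_mul,
      Ideal.top_mul,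
      SS_congr I J (show (s : ℤ) - (m + 1).natAbs = ((s : ℤ) - m.natAbs) + 1 by omega)]
    exact SS_I_le I J _
  · rw [G, G, ← mul_assoc, mul_zpow I (by omega)]
    exact Ideal.mul_mono_right (SS_anti I J (by omega))

theorem G_step_down (I J : Ideal R) (s : ℕ) (m : ℤ) : G I J s m ≤ G I J s (m - 1) := by
  rcases le_or_gt m 0 with h | h
  · rw [G, G, zpow_of_nonpos I h, zpow_of_nonpos I (by omega), Ideal.top_mul, Ideal.top_mul]
    exact SS_anti I J (by omega)
  · have hz : zpowIdeal I m = I * zpowIdeal I (m - 1) := by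
      rw [mul_zpow I (by omega), sub_add_cancel]
    rw [G, G, hz, mul_assoc, mul_left_comm,
      SS_congr I J (show (s : ℤ) - (m - 1).natAbs = ((s : ℤ) - m.natAbs) + 1 by omega)]
    exact Ideal.mul_mono_right (SS_I_le I J _)

theorem G_I_le (I J : Ideal R) (s : ℕ) (n : ℤ) : I * G I J s (n - 1) ≤ G I J (s + 1) n := by
  rcases lt_or_ge 0 n with h | h
  · have hz : I * zpowIdeal I (n - 1) = zpowIdeal I n := by
      rw [mul_zpow I (by omega), sub_add_cancel]
    rw [G, G, ← mul_assoc, hz,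
      SS_congr I J (show (s : ℤ) - (n - 1).natAbs = ((s + 1 : ℕ) : ℤ) - n.natAbs by omega)]
  · rw [G, G, zpow_of_nonpos I (by omega), zpow_of_nonpos I h, Ideal.top_mul, Ideal.top_mul,
      SS_congr I J (show (s : ℤ) - (n - 1).natAbs
        = ((((s + 1 : ℕ) : ℤ) - n.natAbs) - 1) - 1 by omega)]
    have h2 := SS_I2_le I J ((((s + 1 : ℕ) : ℤ) - n.natAbs) - 1)
    rwa [sub_add_cancel] at h2

theorem G_J_le (I J : Ideal R) (s : ℕ) (n : ℤ) : J * G I J s n ≤ G I J (s + 1) n := by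
  rw [G, G, mul_left_comm,
    SS_congr I J (show ((s + 1 : ℕ) : ℤ) - n.natAbs = ((s : ℤ) - n.natAbs) + 1 by omega)]
  exact Ideal.mul_mono_right (SS_J_le I J _)

theorem G_T_le (I J : Ideal R) (s : ℕ) (n : ℤ) : G I J s (n + 1) ≤ G I J (s + 1) n := by
  rcases le_or_gt n (-1) with h | h
  · rw [G, G, zpow_of_nonpos I (by omega), zpow_of_nonpos I (by omega), Ideal.top_mul,
      Ideal.top_mul,
      SS_congr I J (show (s : ℤ) - (n + 1).natAbs = ((s + 1 : ℕ) : ℤ) - n.natAbs by omega)]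
  · have hz : zpowIdeal I (n + 1) = I * zpowIdeal I n := (mul_zpow I (by omega)).symm
    rw [G, G, hz, mul_assoc, mul_left_comm,
      SS_congr I J (show (s : ℤ) - (n + 1).natAbs
        = ((((s + 1 : ℕ) : ℤ) - n.natAbs) - 1) - 1 by omega)]
    refine Ideal.mul_mono_right ?_
    have h2 := SS_I2_le I J ((((s + 1 : ℕ) : ℤ) - n.natAbs) - 1)
    rwa [sub_add_cancel] at h2

theorem G_zpow_le (I J : Ideal R) (s : ℕ) (k n : ℤ) :
    zpowIdeal I k * G I J s n ≤ G I J s (k + n) := by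
  induction k using Int.induction_on with
  | zero => rw [zpow_zero, Ideal.top_mul, zero_add]
  | succ k ih =>
    have hz : zpowIdeal I ((k : ℤ) + 1) = I * zpowIdeal I (k : ℤ) :=
      (mul_zpow I (by omega)).symm
    rw [hz, mul_assoc]
    refine le_trans (Ideal.mul_mono_right ih) (le_trans (G_step_up I J s ((k : ℤ) + n)) ?_)
    rw [show (k : ℤ) + n + 1 = (k : ℤ) + 1 + n by ring]
  | pred k ih =>
    rw [zpow_of_nonpos I (by omega), Ideal.top_mul]
    have h1 : G I J s n ≤ G I J s (-(k : ℤ) + n) := by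
      have h2 := ih
      rwa [zpow_of_nonpos I (by omega), Ideal.top_mul] at h2
    refine le_trans h1 (le_trans (G_step_down I J s (-(k : ℤ) + n)) ?_)
    rw [show -(k : ℤ) + n - 1 = -(k : ℤ) - 1 + n by ring]

theorem G_split (I J : Ideal R) (s : ℕ) (n : ℤ) :
    G I J (s + 1) n ≤ I * G I J s (n - 1) ⊔ J * G I J s n ⊔ G I J s (n + 1) := by
  rcases lt_trichotomy n 0 with h | rfl | h
  · refine le_trans (le_of_eq ?_) le_sup_right
    rw [G, G, zpow_of_nonpos I (by omega), zpow_of_nonpos I (by omega), Ideal.top_mul,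
      Ideal.top_mul,
      SS_congr I J (show ((s + 1 : ℕ) : ℤ) - n.natAbs = (s : ℤ) - (n + 1).natAbs by omega)]
  · refine le_trans ?_ le_sup_left
    rw [G, G, G, zpow_zero, zpow_of_nonpos I (show (0 : ℤ) - 1 ≤ 0 by omega), Ideal.top_mul,
      Ideal.top_mul, Ideal.top_mul,
      SS_congr I J (show ((s + 1 : ℕ) : ℤ) - ((0 : ℤ).natAbs : ℤ) = (s : ℤ) + 1 by omega),
      SS_congr I J (show (s : ℤ) - (((0 : ℤ) - 1).natAbs : ℤ) = (s : ℤ) - 1 by omega),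
      SS_congr I J (show (s : ℤ) - (((0 : ℤ)).natAbs : ℤ) = (s : ℤ) by omega)]
    exact SS_split I J s
  · refine le_trans (le_of_eq ?_) (le_trans le_sup_left le_sup_left)
    have hz : zpowIdeal I n = I * zpowIdeal I (n - 1) := by
      rw [mul_zpow I (by omega), sub_add_cancel]
    rw [G, G, hz, mul_assoc,
      SS_congr I J (show ((s + 1 : ℕ) : ℤ) - n.natAbs = (s : ℤ) - (n - 1).natAbs by omega)]

/-! ### graded components of homogeneous ideals -/

def comp (I : Ideal R) (𝓐 : Ideal (extRees R I)) (n : ℤ) : Ideal R where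
  carrier := {a | memExtRees 𝓐 n a}
  add_mem' := by
    rintro a b ⟨y, hy, hy'⟩ ⟨z, hz, hz'⟩
    exact ⟨y + z, Ideal.add_mem _ hy hz, by
      rw [Subalgebra.coe_add, hy', hz', map_add, add_mul]⟩
  zero_mem' := ⟨0, Ideal.zero_mem _, by rw [Subalgebra.coe_zero, map_zero, zero_mul]⟩
  smul_mem' := by
    rintro c a ⟨y, hy, hy'⟩
    refine ⟨⟨C c, C_mem I c⟩ * y, Ideal.mul_mem_left _ _ hy, ?_⟩
    rw [Subalgebra.coe_mul, hy']
    show (C c : LaurentPolynomial R) * (C a * T n) = C (c • a) * T n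
    rw [smul_eq_mul, map_mul, mul_assoc]

theorem coeff_mem_pow (I J : Ideal R) :
    ∀ (s : ℕ) (y : extRees R I), y ∈ extReesIdeal R I J ^ s →
      ∀ n : ℤ, (y : LaurentPolynomial R).coeff n ∈ G I J s n := by
  intro s
  induction s with
  | zero =>
    intro y _ n
    rw [G_zero]
    exact coeff_mem_of_mem_extRees y.2 n
  | succ s ih =>
    intro y hy
    rw [pow_succ] at hy
    refine Submodule.mul_induction_on hy ?_ ?_
    · intro x hx m hm
      refine Submodule.span_induction (p := fun m _ => ∀ n : ℤ,
        ((x * m : extRees R I) : LaurentPolynomial R).coeff n ∈ G I J (s + 1) n) ?_ ?_ ?_ ?_ hm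
      · rintro g ((hg | ⟨c, hc, hgc⟩) | ⟨b, hb, hgb⟩) n
        · have hg' : (g : LaurentPolynomial R) = T (-1) := hg
          rw [Subalgebra.coe_mul, hg', coeff_mul_T, show n - (-1) = n + 1 by ring]
          exact G_T_le I J s n (ih x hx (n + 1))
        · rw [Subalgebra.coe_mul, ← hgc,
            show (C c : LaurentPolynomial R) = C c * T 0 by rw [T_zero, mul_one],
            coeff_mul_C_mul_T, sub_zero]
          have h2 : G I J s n * J ≤ G I J (s + 1) n :=
            le_trans (le_of_eq (mul_comm _ _)) (G_J_le I J s n)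
          exact h2 (Ideal.mul_mem_mul (ih x hx n) hc)
        · rw [Subalgebra.coe_mul, ← hgb, coeff_mul_C_mul_T]
          have h2 : G I J s (n - 1) * I ≤ G I J (s + 1) n :=
            le_trans (le_of_eq (mul_comm _ _)) (G_I_le I J s n)
          exact h2 (Ideal.mul_mem_mul (ih x hx (n - 1)) hb)
      · intro n
        rw [mul_zero, Subalgebra.coe_zero]
        exact Submodule.zero_mem _
      · intro p q _ _ ihp ihq n
        rw [mul_add, Subalgebra.coe_add, AddMonoidAlgebra.coeff_add, Finsupp.add_apply]
        exact Ideal.add_mem _ (ihp n) (ihq n)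
      · intro t g _ ihg n
        have h1 : x * (t • g) = t * (x * g) := by
          rw [smul_eq_mul, mul_left_comm]
        rw [h1, Subalgebra.coe_mul]
        exact coeff_mul_mem I (G_zpow_le I J (s + 1))
          (coeff_mem_of_mem_extRees t.2) ihg n
    · intro a b ha hb n
      rw [Subalgebra.coe_add, AddMonoidAlgebra.coeff_add, Finsupp.add_apply]
      exact Ideal.add_mem _ (ha n) (hb n)

theorem G_le_comp (I J : Ideal R) :
    ∀ (s : ℕ) (n : ℤ), G I J s n ≤ comp I (extReesIdeal R I J ^ s) n := by
  intro s
  induction s with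
  | zero =>
    intro n a ha
    rw [G_zero] at ha
    refine ⟨⟨C a * T n, C_mul_T_mem ha⟩, ?_, rfl⟩
    rw [pow_zero, Ideal.one_eq_top]
    exact Submodule.mem_top
  | succ s ih =>
    intro n
    refine le_trans (G_split I J s n) (sup_le (sup_le ?_ ?_) ?_)
    · rw [Ideal.mul_le]
      intro b hb c hc
      obtain ⟨y, hy, hy'⟩ := ih (n - 1) hc
      refine ⟨y * ⟨C b * T 1,
        Algebra.subset_adjoin (Set.mem_union_right _ ⟨b, hb, rfl⟩)⟩, ?_, ?_⟩
      · rw [pow_succ]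
        exact Submodule.mul_mem_mul hy
          (Ideal.subset_span (Set.mem_union_right _ ⟨b, hb, rfl⟩))
      · rw [Subalgebra.coe_mul, hy']
        show (C c * T (n - 1)) * (C b * T 1) = C (b * c) * T n
        rw [mul_mul_mul_comm, ← map_mul, ← T_add, sub_add_cancel, mul_comm c b]
    · rw [Ideal.mul_le]
      intro b hb c hc
      obtain ⟨y, hy, hy'⟩ := ih n hc
      refine ⟨y * ⟨C b, C_mem I b⟩, ?_, ?_⟩
      · rw [pow_succ]
        exact Submodule.mul_mem_mul hy
          (Ideal.subset_span (Set.mem_union_left _ (Set.mem_union_right _ ⟨b, hb, rfl⟩)))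
      · rw [Subalgebra.coe_mul, hy']
        show (C c * T n) * C b = C (b * c) * T n
        rw [mul_right_comm, ← map_mul, mul_comm c b]
    · intro c hc
      obtain ⟨y, hy, hy'⟩ := ih (n + 1) hc
      refine ⟨y * ⟨T (-1), T_neg_one_mem I⟩, ?_, ?_⟩
      · rw [pow_succ]
        exact Submodule.mul_mem_mul hy
          (Ideal.subset_span (Set.mem_union_left _ (Set.mem_union_left _ rfl)))
      · rw [Subalgebra.coe_mul, hy']
        show (C c * T (n + 1)) * T (-1) = C c * T n
        rw [mul_T_assoc, show n + 1 + (-1) = n by ring]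

theorem memExtRees_pow_iff (I J : Ideal R) (s : ℕ) (n : ℤ) (a : R) :
    memExtRees (extReesIdeal R I J ^ s) n a ↔ a ∈ G I J s n := by
  constructor
  · rintro ⟨y, hy, hy'⟩
    have h1 := coeff_mem_pow I J s y hy n
    rwa [hy', coeff_C_mul_T, if_pos rfl] at h1
  · intro ha
    exact G_le_comp I J s n ha

end Lemma24Aux


/-- Lemma 2.4: let `J` be an `m`-primary ideal and `I ⊆ m` an ideal of positive height in a
Noetherian local ring `(R, m)` of dimension `d > 0` with infinite residue field.  Put
`T = B(I)`, `M = (t⁻¹, J, It)`, `K = J² + I` and `H = J + I`.  Then for `0 ≤ j < r` the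
homogeneous ideal `M^{2(r−j)}` decomposes by degree: `a tⁿ ∈ M^{2(r−j)}` iff `a ∈ Cₙ`, where
(with `Iᵉ = Kᵉ = R` for `e ≤ 0`): `Cₙ = Iⁿ` if `|n| ≥ 2r`; `Cₙ = Iⁿ K^{i−j}` if
`|n| = 2r − 2i` with `1 ≤ i ≤ r − 1`; `Cₙ = Iⁿ` if `|n| = 2r − 2i − 1` with `0 ≤ i ≤ j − 1`;
`Cₙ = Iⁿ H K^{i−j}` if `|n| = 2r − 2i − 1` with `j ≤ i ≤ r − 1`; and `C₀ = K^{r−j}`. -/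
theorem pow_extReesIdeal_graded_components (R : Type*) [CommRing R] [IsNoetherianRing R]
    [IsLocalRing R] [Infinite (ResidueField R)] (d : ℕ) (hd : 0 < d)
    (hdim : ringKrullDim R = d) (I J : Ideal R) (hJ : J.radical = maximalIdeal R)
    (hIm : I ≤ maximalIdeal R) (hI : PosHeight I)
    (j r : ℕ) (hjr : j < r) (n : ℤ) (a : R) :
    (2 * r ≤ n.natAbs →
      (memExtRees ((extReesIdeal R I J) ^ (2 * (r - j))) n a ↔ a ∈ zpowIdeal I n)) ∧
    (∀ i : ℕ, 1 ≤ i → i ≤ r - 1 → n.natAbs = 2 * r - 2 * i →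
      (memExtRees ((extReesIdeal R I J) ^ (2 * (r - j))) n a ↔
        a ∈ zpowIdeal I n * zpowIdeal (J ^ 2 + I) ((i : ℤ) - (j : ℤ)))) ∧
    (∀ i : ℕ, i < j → n.natAbs = 2 * r - 2 * i - 1 →
      (memExtRees ((extReesIdeal R I J) ^ (2 * (r - j))) n a ↔ a ∈ zpowIdeal I n)) ∧
    (∀ i : ℕ, j ≤ i → i ≤ r - 1 → n.natAbs = 2 * r - 2 * i - 1 →
      (memExtRees ((extReesIdeal R I J) ^ (2 * (r - j))) n a ↔
        a ∈ zpowIdeal I n * ((J + I) * zpowIdeal (J ^ 2 + I) ((i : ℤ) - (j : ℤ))))) ∧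
    (n = 0 →
      (memExtRees ((extReesIdeal R I J) ^ (2 * (r - j))) n a ↔ a ∈ (J ^ 2 + I) ^ (r - j))) := by
  classical
  refine ⟨?_, ?_, ?_, ?_, ?_⟩
  · intro hn
    rw [Lemma24Aux.memExtRees_pow_iff I J (2 * (r - j)) n a, Lemma24Aux.G,
      Lemma24Aux.SS_of_nonpos I J
        (show ((2 * (r - j) : ℕ) : ℤ) - (n.natAbs : ℤ) ≤ 0 by omega), Ideal.mul_top]
  · intro i hi1 hi2 hn
    rw [Lemma24Aux.memExtRees_pow_iff I J (2 * (r - j)) n a, Lemma24Aux.G,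
      Lemma24Aux.SS_congr I J (show ((2 * (r - j) : ℕ) : ℤ) - (n.natAbs : ℤ)
        = 2 * ((i : ℤ) - (j : ℤ)) by omega),
      Lemma24Aux.SS_two_mul, ← Submodule.add_eq_sup]
  · intro i hij hn
    rw [Lemma24Aux.memExtRees_pow_iff I J (2 * (r - j)) n a, Lemma24Aux.G,
      Lemma24Aux.SS_of_nonpos I J
        (show ((2 * (r - j) : ℕ) : ℤ) - (n.natAbs : ℤ) ≤ 0 by omega), Ideal.mul_top]
  · intro i hij hir hn
    rw [Lemma24Aux.memExtRees_pow_iff I J (2 * (r - j)) n a, Lemma24Aux.G,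
      Lemma24Aux.SS_congr I J (show ((2 * (r - j) : ℕ) : ℤ) - (n.natAbs : ℤ)
        = 2 * ((i : ℤ) - (j : ℤ)) + 1 by omega),
      Lemma24Aux.SS_two_mul_add_one I J (show (0 : ℤ) ≤ (i : ℤ) - (j : ℤ) by omega),
      ← Submodule.add_eq_sup, ← Submodule.add_eq_sup]
  · rintro rfl
    rw [Lemma24Aux.memExtRees_pow_iff I J (2 * (r - j)) 0 a, Lemma24Aux.G,
      Lemma24Aux.zpow_zero, Ideal.top_mul,
      Lemma24Aux.SS_congr I J (show ((2 * (r - j) : ℕ) : ℤ) - (((0 : ℤ)).natAbs : ℤ)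
        = ((2 * (r - j) : ℕ) : ℤ) by omega),
      Lemma24Aux.SS, Int.toNat_natCast, Lemma24Aux.SSn_two_mul, ← Submodule.add_eq_sup]


end
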